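/- Let a, b ∈ [0, π) with a ≠ π/2. Then there is no unit vector w ∈ ℂ⁴ that is simultaneously unbiased to the standard basis B₁, to the Fourier basis B₂, and to the basis B₃(a,b); i.e. there is no unit vector w ∈ ℂ⁴ with |⟨u, w⟩|² = 1/4 for every vector u belonging to any of the three bases B₁, B₂, B₃(a,b). -/

import Mathlib

open scoped ComplexInnerProductSpace

/-- The Fourier basis `B₂` of `ℂ⁴`: `(1/2)(1,1,1,1)`, `(1/2)(1,i,−1,−i)`,
`(1/2)(1,−1,1,−1)`, `(1/2)(1,−i,−1,i)`; the `m`-th component of the `j`-th vector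
is `i^{jm}/2`. -/
noncomputable def fourier4 (j : Fin 4) : EuclideanSpace ℂ (Fin 4) :=
  WithLp.toLp 2 (fun m => (1 / 2 : ℂ) * Complex.I ^ ((j : ℕ) * (m : ℕ)))

/-- The basis `B₃(a,b)` of `ℂ⁴` consisting of the four vectors
`(1/2)(1, e^{ia}, 1, −e^{ia})`, `(1/2)(1, −e^{ia}, 1, e^{ia})`,
`(1/2)(1, e^{ib}, −1, e^{ib})`, `(1/2)(1, −e^{ib}, −1, −e^{ib})`. -/
noncomputable def basis3 (a b : ℝ) (j : Fin 4) : EuclideanSpace ℂ (Fin 4) :=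
  WithLp.toLp 2 (fun m => (1 / 2 : ℂ) *
    !![1, Complex.exp (a * Complex.I), 1, -Complex.exp (a * Complex.I);
       1, -Complex.exp (a * Complex.I), 1, Complex.exp (a * Complex.I);
       1, Complex.exp (b * Complex.I), -1, Complex.exp (b * Complex.I);
       1, -Complex.exp (b * Complex.I), -1, -Complex.exp (b * Complex.I)] j m)

theorem stmt_11 (a b : ℝ) (ha0 : 0 ≤ a) (haπ : a < Real.pi)
    (hb0 : 0 ≤ b) (hbπ : b < Real.pi) (ha : a ≠ Real.pi / 2) :
    ¬ ∃ w : EuclideanSpace ℂ (Fin 4), ‖w‖ = 1 ∧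
      (∀ j : Fin 4, ‖⟪EuclideanSpace.single j (1 : ℂ), w⟫‖ ^ 2 = 1 / 4) ∧
      (∀ j : Fin 4, ‖⟪fourier4 j, w⟫‖ ^ 2 = 1 / 4) ∧
      (∀ j : Fin 4, ‖⟪basis3 a b j, w⟫‖ ^ 2 = 1 / 4) := by
  rintro ⟨w, -, h1, h2, h3⟩
  have key : ∀ z : ℂ, ‖z‖ ^ 2 = 1/4 → z * (starRingEnd ℂ) z = 1/4 := by
    intro z hz
    rw [Complex.mul_conj, ← Complex.sq_norm, hz]
    norm_num
  have h3' : ((3:Fin 4):ℕ) = 3 := rfl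
  have h2' : ((2:Fin 4):ℕ) = 2 := rfl
  -- inner product values
  have if0 : ⟪fourier4 0, w⟫ = (1/2 : ℂ) * (w 0 + w 1 + w 2 + w 3) := by
    simp [fourier4, PiLp.inner_apply, Fin.sum_univ_four, map_ofNat, h3', h2']
    norm_num [h3', h2', pow_succ]; ring
  have if1 : ⟪fourier4 1, w⟫ = (1/2 : ℂ) * (w 0 - Complex.I * w 1 - w 2 + Complex.I * w 3) := by
    simp [fourier4, PiLp.inner_apply, Fin.sum_univ_four, map_ofNat, h3', h2']
    norm_num [h3', h2', pow_succ]; ring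
  have if2 : ⟪fourier4 2, w⟫ = (1/2 : ℂ) * (w 0 - w 1 + w 2 - w 3) := by
    simp [fourier4, PiLp.inner_apply, Fin.sum_univ_four, map_ofNat, h3', h2']
    norm_num [h3', h2', pow_succ]; ring
  have if3 : ⟪fourier4 3, w⟫ = (1/2 : ℂ) * (w 0 + Complex.I * w 1 - w 2 - Complex.I * w 3) := by
    simp [fourier4, PiLp.inner_apply, Fin.sum_univ_four, map_ofNat, h3', h2']
    norm_num [h3', h2', pow_succ]; ring
  have ig0 : ⟪basis3 a b 0, w⟫ = (1/2 : ℂ) * (w 0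
      + (starRingEnd ℂ) (Complex.exp (a * Complex.I)) * w 1
      + w 2 - (starRingEnd ℂ) (Complex.exp (a * Complex.I)) * w 3) := by
    simp [basis3, PiLp.inner_apply, Fin.sum_univ_four, map_ofNat]; ring
  have ig1 : ⟪basis3 a b 1, w⟫ = (1/2 : ℂ) * (w 0
      - (starRingEnd ℂ) (Complex.exp (a * Complex.I)) * w 1
      + w 2 + (starRingEnd ℂ) (Complex.exp (a * Complex.I)) * w 3) := by
    simp [basis3, PiLp.inner_apply, Fin.sum_univ_four, map_ofNat]; ring
  -- notation
  set c0 := w 0 with hc0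
  set c1 := w 1 with hc1
  set c2 := w 2 with hc2
  set c3 := w 3 with hc3
  set d0 := (starRingEnd ℂ) c0 with hd0
  set d1 := (starRingEnd ℂ) c1 with hd1
  set d2 := (starRingEnd ℂ) c2 with hd2
  set d3 := (starRingEnd ℂ) c3 with hd3
  set e := Complex.exp (a * Complex.I) with heq
  set e' := (starRingEnd ℂ) e with he'
  have hee : e * e' = 1 := by
    rw [he', heq, Complex.mul_conj, Complex.normSq_eq_norm_sq, Complex.norm_exp_ofReal_mul_I]
    norm_num
  -- scalar equations
  have hE0 : c0 * d0 = 1/4 := by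
    have h := h1 0
    rw [EuclideanSpace.inner_single_left, map_one, one_mul] at h
    exact key _ h
  have hE1 : c1 * d1 = 1/4 := by
    have h := h1 1
    rw [EuclideanSpace.inner_single_left, map_one, one_mul] at h
    exact key _ h
  have hE2 : c2 * d2 = 1/4 := by
    have h := h1 2
    rw [EuclideanSpace.inner_single_left, map_one, one_mul] at h
    exact key _ h
  have hE3 : c3 * d3 = 1/4 := by
    have h := h1 3
    rw [EuclideanSpace.inner_single_left, map_one, one_mul] at h
    exact key _ h
  have hF0 : (c0+c1+c2+c3) * (d0+d1+d2+d3) = 1 := by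
    have h := key _ (h2 0)
    rw [if0] at h
    simp only [map_mul, map_add, map_sub, map_one, map_div₀, map_ofNat, Complex.conj_I,
      Complex.conj_conj] at h
    rw [← hd0, ← hd1, ← hd2, ← hd3] at h
    linear_combination 4 * h
  have hF1 : (c0 - Complex.I*c1 - c2 + Complex.I*c3) * (d0 + Complex.I*d1 - d2 - Complex.I*d3) = 1 := by
    have h := key _ (h2 1)
    rw [if1] at h
    simp only [map_mul, map_add, map_sub, map_one, map_div₀, map_ofNat, Complex.conj_I,
      Complex.conj_conj] at h
    rw [← hd0, ← hd1, ← hd2, ← hd3] at h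
    linear_combination 4 * h
  have hF2 : (c0 - c1 + c2 - c3) * (d0 - d1 + d2 - d3) = 1 := by
    have h := key _ (h2 2)
    rw [if2] at h
    simp only [map_mul, map_add, map_sub, map_one, map_div₀, map_ofNat, Complex.conj_I,
      Complex.conj_conj] at h
    rw [← hd0, ← hd1, ← hd2, ← hd3] at h
    linear_combination 4 * h
  have hF3 : (c0 + Complex.I*c1 - c2 - Complex.I*c3) * (d0 - Complex.I*d1 - d2 + Complex.I*d3) = 1 := by
    have h := key _ (h2 3)
    rw [if3] at h
    simp only [map_mul, map_add, map_sub, map_one, map_div₀, map_ofNat, Complex.conj_I,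
      Complex.conj_conj] at h
    rw [← hd0, ← hd1, ← hd2, ← hd3] at h
    linear_combination 4 * h
  have hce : (starRingEnd ℂ) e' = e := by rw [he', Complex.conj_conj]
  have hG0 : (c0 + e'*c1 + c2 - e'*c3) * (d0 + e*d1 + d2 - e*d3) = 1 := by
    have h := key _ (h3 0)
    rw [ig0] at h
    simp only [map_mul, map_add, map_sub, map_one, map_div₀, map_ofNat, Complex.conj_I,
      Complex.conj_conj] at h
    rw [← hd0, ← hd1, ← hd2, ← hd3, hce] at h
    linear_combination 4 * h
  have hG1 : (c0 - e'*c1 + c2 + e'*c3) * (d0 - e*d1 + d2 + e*d3) = 1 := by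
    have h := key _ (h3 1)
    rw [ig1] at h
    simp only [map_mul, map_add, map_sub, map_one, map_div₀, map_ofNat, Complex.conj_I,
      Complex.conj_conj] at h
    rw [← hd0, ← hd1, ← hd2, ← hd3, hce] at h
    linear_combination 4 * h
  -- the algebra: P = c0+c2, R = c0-c2, Q = c1+c3, S = c1-c3 (bars via d's)
  have L1 : (c0+c2)*(d1+d3) + (d0+d2)*(c1+c3) = 0 := by
    linear_combination (hF0 - hF2) / 2
  have L2 : (c0+c2)*(d0+d2) + (c1+c3)*(d1+d3) = 1 := by
    linear_combination (hF0 + hF2) / 2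
  have L3 : (c0-c2)*(d1-d3) - (d0-d2)*(c1-c3) = 0 := by
    linear_combination (-Complex.I/2) * (hF1 - hF3) + ((c0-c2)*(d1-d3) - (d0-d2)*(c1-c3)) * Complex.I_sq
  have L5 : (c0+c2)*(d0+d2) + (c1-c3)*(d1-d3) = 1 := by
    linear_combination (hG0 + hG1) / 2 - (c1-c3)*(d1-d3) * hee
  have L7 : (c0+c2)*(d0+d2) + (c0-c2)*(d0-d2) = 1 := by
    linear_combination 2*hE0 + 2*hE2
  have L8 : (c1+c3)*(d1+d3) + (c1-c3)*(d1-d3) = 1 := by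
    linear_combination 2*hE1 + 2*hE3
  have L9 : (c1+c3)*(d1-d3) + (d1+d3)*(c1-c3) = 0 := by
    linear_combination 2*hE1 - 2*hE3
  have L10 : (c0+c2)*(d0-d2) + (d0+d2)*(c0-c2) = 0 := by
    linear_combination 2*hE0 - 2*hE2
  have hp : (c0+c2)*(d0+d2) = 1/2 := by
    linear_combination (L2 + L5 - L8) / 2
  have hq : (c1+c3)*(d1+d3) = 1/2 := by linear_combination L2 - hp
  have hs : (c1-c3)*(d1-d3) = 1/2 := by linear_combination L5 - hp
  have hr : (c0-c2)*(d0-d2) = 1/2 := by linear_combination L7 - hp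
  -- (i): Q̄R - QR̄ = 0
  have hi : (d1+d3)*(c0-c2) - (c1+c3)*(d0-d2) = 0 := by
    linear_combination 2*(d0+d2)*(c0-c2)*L1 - 2*(d0+d2)*(c1+c3)*L10
      - 2*((d1+d3)*(c0-c2) - (c1+c3)*(d0-d2))*hp
  -- (ii): QR̄ + Q̄R = 0
  have hii : (c1+c3)*(d0-d2) + (d1+d3)*(c0-c2) = 0 := by
    linear_combination 2*(d0-d2)*(c1-c3)*L9 + 2*(d1+d3)*(c1-c3)*L3
      - 2*((c1+c3)*(d0-d2) + (d1+d3)*(c0-c2))*hs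
  have hT : (c1+c3)*(d0-d2) = 0 := by linear_combination (hii - hi) / 2
  have : (1:ℂ)/4 = 0 := by
    linear_combination ((d1+d3)*(c0-c2)) * hT - (c0-c2)*(d0-d2)*hq - (1/2)*hr
  norm_num at this
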